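/- Let X be a compact metric space, T > 0, λ ∈ ℂ, and k : X × X → ℝ a continuous symmetric positive semidefinite base kernel. Then the Koopman eigenfunction kernel k^λ is Hermitian positive semidefinite on continuous trajectories: for every N ∈ ℕ, continuous trajectories x^(1),…,x^(N) : [0,T] → X and complex coefficients c_1,…,c_N, the sum Σ_{i,j=1}^{N} conj(c_i) · c_j · k^λ(x^(i), x^(j)) is a nonnegative real number. -/

import Mathlib

open MeasureTheory

/-- Continuous-time Koopman eigenfunction kernel
`k^λ(x,x') = ∫_0^T ∫_0^T exp(−λτ) k(x τ, x' τ') exp(−conj(λ) τ') dτ dτ'`. -/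
noncomputable def klam {X : Type*} (T : ℝ) (lam : ℂ) (k : X → X → ℝ) (x x' : ℝ → X) : ℂ :=
  ∫ τ in (0:ℝ)..T, ∫ τ' in (0:ℝ)..T,
    Complex.exp (-lam * (τ : ℂ)) * (k (x τ) (x' τ') : ℂ) *
      Complex.exp (-(starRingEnd ℂ) lam * (τ' : ℂ))

/-- PSD over `Fin M` index sets extends to arbitrary finite index types. -/
lemma psd_fintype' {X : Type*} {k : X → X → ℝ}
    (hpsd : ∀ (M : ℕ) (a : Fin M → X) (c : Fin M → ℂ),
      (∑ i, ∑ j, (starRingEnd ℂ) (c i) * c j * (k (a i) (a j) : ℂ)).im = 0 ∧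
      0 ≤ (∑ i, ∑ j, (starRingEnd ℂ) (c i) * c j * (k (a i) (a j) : ℂ)).re)
    {ι : Type*} [Fintype ι] (a : ι → X) (c : ι → ℂ) :
    (∑ i, ∑ j, (starRingEnd ℂ) (c i) * c j * (k (a i) (a j) : ℂ)).im = 0 ∧
    0 ≤ (∑ i, ∑ j, (starRingEnd ℂ) (c i) * c j * (k (a i) (a j) : ℂ)).re := by
  classical
  let e := Fintype.equivFin ι
  have h := hpsd (Fintype.card ι) (fun i => a (e.symm i)) (fun i => c (e.symm i))
  have hs : (∑ i, ∑ j, (starRingEnd ℂ) (c i) * c j * (k (a i) (a j) : ℂ))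
      = ∑ i : Fin (Fintype.card ι), ∑ j : Fin (Fintype.card ι),
        (starRingEnd ℂ) (c (e.symm i)) * c (e.symm j) * (k (a (e.symm i)) (a (e.symm j)) : ℂ) := by
    rw [← Equiv.sum_comp e.symm
      (fun i => ∑ j, (starRingEnd ℂ) (c i) * c j * (k (a i) (a j) : ℂ))]
    exact Finset.sum_congr rfl fun i _ => (Equiv.sum_comp e.symm
      (fun j => (starRingEnd ℂ) (c (e.symm i)) * c j * (k (a (e.symm i)) (a j) : ℂ))).symm
  rw [hs]
  exact h

/-- Pointwise finite sums of interval integrable functions are interval integrable. -/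
lemma intInt_sum {ι : Type*} (s : Finset ι) {f : ι → ℝ → ℂ} {a b : ℝ}
    (h : ∀ i ∈ s, IntervalIntegrable (f i) MeasureTheory.volume a b) :
    IntervalIntegrable (fun t => ∑ i ∈ s, f i t) MeasureTheory.volume a b := by
  have h2 := IntervalIntegrable.sum s h
  have heq : (∑ i ∈ s, f i) = fun t => ∑ i ∈ s, f i t := by
    ext t; simp
  rwa [heq] at h2

/-- Interchange a double finite sum with an interval integral. -/
lemma sumsum_integral {N : ℕ} {a b : ℝ} {f : Fin N → Fin N → ℝ → ℂ}
    (h : ∀ i j, IntervalIntegrable (f i j) MeasureTheory.volume a b) :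
    ∑ i, ∑ j, (∫ t in a..b, f i j t) = ∫ t in a..b, ∑ i, ∑ j, f i j t := by
  have h2 : (∫ t in a..b, ∑ i, ∑ j, f i j t) = ∑ i, ∫ t in a..b, ∑ j, f i j t :=
    intervalIntegral.integral_finset_sum (fun i _ => intInt_sum _ (fun j _ => h i j))
  rw [h2]
  exact Finset.sum_congr rfl fun i _ =>
    (intervalIntegral.integral_finset_sum (fun j _ => h i j)).symm

/-- The core Riemann-sum positivity argument for continuous data. -/
lemma core_psd {X : Type*} [MetricSpace X] [CompactSpace X] (T : ℝ) (hT : 0 < T)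
    (k : X → X → ℝ) (hk : Continuous fun p : X × X => k p.1 p.2)
    (hpsd : ∀ (M : ℕ) (a : Fin M → X) (c : Fin M → ℂ),
      (∑ i, ∑ j, (starRingEnd ℂ) (c i) * c j * (k (a i) (a j) : ℂ)).im = 0 ∧
      0 ≤ (∑ i, ∑ j, (starRingEnd ℂ) (c i) * c j * (k (a i) (a j) : ℂ)).re)
    (N : ℕ) (y : Fin N → ℝ → X) (hy : ∀ i, Continuous (y i))
    (g : Fin N → ℝ → ℂ) (hg : ∀ i, Continuous (g i)) :
    (∫ s in (0:ℝ)..T, ∫ t in (0:ℝ)..T,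
        ∑ i, ∑ j, (starRingEnd ℂ) (g i s) * g j t * (k (y i s) (y j t) : ℂ)).im = 0 ∧
    0 ≤ (∫ s in (0:ℝ)..T, ∫ t in (0:ℝ)..T,
        ∑ i, ∑ j, (starRingEnd ℂ) (g i s) * g j t * (k (y i s) (y j t) : ℂ)).re := by
  classical
  set F : ℝ → ℝ → ℂ :=
    fun s t => ∑ i, ∑ j, (starRingEnd ℂ) (g i s) * g j t * (k (y i s) (y j t) : ℂ) with hF
  have hconjc : Continuous fun z : ℂ => (starRingEnd ℂ) z := by
    simp only [starRingEnd_apply]; exact continuous_star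
  have hterm : ∀ i j : Fin N, Continuous (fun p : ℝ × ℝ =>
      (starRingEnd ℂ) (g i p.1) * g j p.2 * (k (y i p.1) (y j p.2) : ℂ)) := by
    intro i j
    refine Continuous.mul (Continuous.mul ?_ ?_) ?_
    · exact hconjc.comp ((hg i).comp continuous_fst)
    · exact (hg j).comp continuous_snd
    · exact Complex.continuous_ofReal.comp
        (hk.comp (((hy i).comp continuous_fst).prodMk ((hy j).comp continuous_snd)))
  have hFc : Continuous fun p : ℝ × ℝ => F p.1 p.2 := by
    exact continuous_finset_sum _ fun i _ => continuous_finset_sum _ fun j _ => hterm i j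
  have hFint : ∀ (s u v : ℝ), IntervalIntegrable (fun t => F s t) volume u v :=
    fun s u v => (hFc.comp (continuous_const.prodMk continuous_id)).intervalIntegrable u v
  have hFu : Continuous (Function.uncurry F) := hFc
  have hGc2 : ∀ u v : ℝ, Continuous fun s => ∫ t in u..v, F s t := fun u v =>
    intervalIntegral.continuous_parametric_intervalIntegral_of_continuous' hFu u v
  set S : ℂ := ∫ s in (0:ℝ)..T, ∫ t in (0:ℝ)..T, F s t with hSdef
  have hK : IsCompact ((Set.Icc (0:ℝ) T) ×ˢ (Set.Icc (0:ℝ) T)) :=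
    isCompact_Icc.prod isCompact_Icc
  have hUC := hK.uniformContinuousOn_of_continuous hFc.continuousOn
  rw [Metric.uniformContinuousOn_iff] at hUC
  have main : ∀ ε : ℝ, 0 < ε → ∃ R : ℂ, R.im = 0 ∧ 0 ≤ R.re ∧ ‖S - R‖ ≤ T ^ 2 * ε := by
    intro ε hε
    obtain ⟨δ, hδ, hd⟩ := hUC ε hε
    obtain ⟨n, hn⟩ := exists_nat_gt (T / δ)
    have hn0 : 0 < (n : ℝ) := lt_trans (by positivity) hn
    set τ : ℝ := T / n with hτ
    have hτ0 : 0 < τ := by positivity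
    have hτδ : τ < δ := by
      have h1 : T < (n : ℝ) * δ := by
        have := (div_lt_iff₀ hδ).mp hn; linarith
      rw [hτ, div_lt_iff₀ hn0]; linarith
    set a : ℕ → ℝ := fun p => p * τ with ha
    have hnτ : (n : ℝ) * τ = T := by rw [hτ]; field_simp
    have haT : a n = T := hnτ
    have ha0 : a 0 = 0 := by simp [ha]
    have hstep : ∀ p : ℕ, a (p + 1) - a p = τ := by
      intro p; simp only [ha]; push_cast; ring
    have hmono : ∀ p, a p ≤ a (p + 1) := fun p => by
      have := hstep p; linarith
    have haN : ∀ p : ℕ, p ≤ n → a p ∈ Set.Icc (0:ℝ) T := by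
      intro p hp
      constructor
      · simp only [ha]; positivity
      · rw [← hnτ]; simp only [ha]
        have : (p : ℝ) ≤ n := by exact_mod_cast hp
        nlinarith
    have hmem : ∀ p : ℕ, p < n → ∀ s ∈ Set.uIoc (a p) (a (p + 1)),
        s ∈ Set.Icc (0:ℝ) T ∧ dist s (a p) ≤ τ := by
      intro p hp s hs
      rw [Set.uIoc_of_le (hmono p)] at hs
      have h1 : (0:ℝ) ≤ a p := (haN p hp.le).1
      have h2 : a (p + 1) ≤ T := (haN (p + 1) hp).2
      have h3 := hstep p
      refine ⟨⟨le_trans h1 hs.1.le, le_trans hs.2 h2⟩, ?_⟩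
      rw [Real.dist_eq, abs_le]
      constructor <;> linarith [hs.1.le, hs.2]
    -- decompose S into cells
    have hSsum : S = ∑ p ∈ Finset.range n, ∑ q ∈ Finset.range n,
        ∫ s in a p..a (p + 1), ∫ t in a q..a (q + 1), F s t := by
      have houter : ∀ s : ℝ, (∫ t in (0:ℝ)..T, F s t)
          = ∑ q ∈ Finset.range n, ∫ t in a q..a (q + 1), F s t := by
        intro s
        rw [intervalIntegral.sum_integral_adjacent_intervals
          (fun q _ => hFint s (a q) (a (q + 1))), ha0, haT]
      calc S = ∫ s in (0:ℝ)..T, ∑ q ∈ Finset.range n, ∫ t in a q..a (q + 1), F s t :=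
              intervalIntegral.integral_congr fun s _ => houter s
        _ = ∑ q ∈ Finset.range n, ∫ s in (0:ℝ)..T, ∫ t in a q..a (q + 1), F s t :=
              intervalIntegral.integral_finset_sum
                (fun q _ => ((hGc2 (a q) (a (q + 1))).intervalIntegrable _ _))
        _ = ∑ q ∈ Finset.range n, ∑ p ∈ Finset.range n,
              ∫ s in a p..a (p + 1), ∫ t in a q..a (q + 1), F s t := by
              refine Finset.sum_congr rfl fun q _ => ?_
              rw [intervalIntegral.sum_integral_adjacent_intervals
                (fun p _ => ((hGc2 (a q) (a (q + 1))).intervalIntegrable _ _)), ha0, haT]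
        _ = _ := Finset.sum_comm
    set R : ℂ := ∑ p ∈ Finset.range n, ∑ q ∈ Finset.range n,
        ((τ * τ : ℝ) : ℂ) * F (a p) (a q) with hR
    -- positivity of R
    have hRpos : R.im = 0 ∧ 0 ≤ R.re := by
      have hQ := psd_fintype' hpsd (fun u : Fin n × Fin N => y u.2 (a u.1))
        (fun u : Fin n × Fin N => ((τ : ℝ) : ℂ) * g u.2 (a u.1))
      have hRQ : R = ∑ u : Fin n × Fin N, ∑ v : Fin n × Fin N,
          (starRingEnd ℂ) (((τ : ℝ) : ℂ) * g u.2 (a u.1)) * (((τ : ℝ) : ℂ) * g v.2 (a v.1)) *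
            (k (y u.2 (a u.1)) (y v.2 (a v.1)) : ℂ) := by
        rw [hR]
        simp only [Fintype.sum_prod_type]
        rw [← Fin.sum_univ_eq_sum_range
          (fun p => ∑ q ∈ Finset.range n, ((τ * τ : ℝ) : ℂ) * F (a p) (a q))]
        refine Finset.sum_congr rfl fun p _ => ?_
        rw [← Fin.sum_univ_eq_sum_range (fun q => ((τ * τ : ℝ) : ℂ) * F (a p) (a q))]
        rw [Finset.sum_comm]
        refine Finset.sum_congr rfl fun q _ => ?_
        simp only [hF, Finset.mul_sum]
        refine Finset.sum_congr rfl fun i _ => Finset.sum_congr rfl fun j _ => ?_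
        rw [map_mul, Complex.conj_ofReal]
        push_cast
        ring
      rw [hRQ]
      exact hQ
    -- error bound
    have hcell : ∀ p ∈ Finset.range n, ∀ q ∈ Finset.range n,
        ‖(∫ s in a p..a (p + 1), ∫ t in a q..a (q + 1), F s t)
          - ((τ * τ : ℝ) : ℂ) * F (a p) (a q)‖ ≤ ε * τ * τ := by
      intro p hp q hq
      rw [Finset.mem_range] at hp hq
      have hapq : (a p, a q) ∈ (Set.Icc (0:ℝ) T) ×ˢ (Set.Icc (0:ℝ) T) :=
        ⟨haN p hp.le, haN q hq.le⟩
      have hE : (∫ s in a p..a (p + 1), ∫ t in a q..a (q + 1), (F s t - F (a p) (a q)))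
          = (∫ s in a p..a (p + 1), ∫ t in a q..a (q + 1), F s t)
            - ((τ * τ : ℝ) : ℂ) * F (a p) (a q) := by
        calc (∫ s in a p..a (p + 1), ∫ t in a q..a (q + 1), (F s t - F (a p) (a q)))
            = ∫ s in a p..a (p + 1),
                ((∫ t in a q..a (q + 1), F s t) - (a (q + 1) - a q) • F (a p) (a q)) :=
              intervalIntegral.integral_congr fun s _ => by
                rw [intervalIntegral.integral_sub (hFint s _ _) intervalIntegrable_const,
                  intervalIntegral.integral_const]
          _ = (∫ s in a p..a (p + 1), ∫ t in a q..a (q + 1), F s t)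
                - (a (p + 1) - a p) • ((a (q + 1) - a q) • F (a p) (a q)) := by
              rw [intervalIntegral.integral_sub
                ((hGc2 (a q) (a (q + 1))).intervalIntegrable _ _) intervalIntegrable_const,
                intervalIntegral.integral_const]
          _ = _ := by
              rw [hstep p, hstep q]
              push_cast [Complex.real_smul]
              ring
      rw [← hE]
      have hinner : ∀ s ∈ Set.uIoc (a p) (a (p + 1)),
          ‖∫ t in a q..a (q + 1), (F s t - F (a p) (a q))‖ ≤ ε * τ := by
        intro s hs
        obtain ⟨hsIcc, hsd⟩ := hmem p hp s hs
        have : ∀ t ∈ Set.uIoc (a q) (a (q + 1)), ‖F s t - F (a p) (a q)‖ ≤ ε := by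
          intro t ht
          obtain ⟨htIcc, htd⟩ := hmem q hq t ht
          have hdist : dist ((s, t) : ℝ × ℝ) (a p, a q) < δ := by
            rw [Prod.dist_eq]
            exact lt_of_le_of_lt (max_le hsd htd) hτδ
          have := hd (s, t) ⟨hsIcc, htIcc⟩ (a p, a q) hapq hdist
          rw [dist_eq_norm] at this
          exact this.le
        have hb := intervalIntegral.norm_integral_le_of_norm_le_const this
        have habs : |a (q + 1) - a q| = τ := by rw [hstep q]; exact abs_of_pos hτ0
        rw [habs] at hb
        exact hb
      have hb := intervalIntegral.norm_integral_le_of_norm_le_const hinner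
      have habs : |a (p + 1) - a p| = τ := by rw [hstep p]; exact abs_of_pos hτ0
      rw [habs] at hb
      exact hb
    have hbound : ‖S - R‖ ≤ T ^ 2 * ε := by
      rw [hSsum, hR, ← Finset.sum_sub_distrib]
      simp_rw [← Finset.sum_sub_distrib]
      refine le_trans (norm_sum_le _ _) ?_
      refine le_trans (Finset.sum_le_sum fun p _ => norm_sum_le _ _) ?_
      refine le_trans (Finset.sum_le_sum fun p hp =>
        Finset.sum_le_sum fun q hq => hcell p hp q hq) ?_
      simp only [Finset.sum_const, Finset.card_range, nsmul_eq_mul]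
      have : (n : ℝ) * ((n : ℝ) * (ε * τ * τ)) = T ^ 2 * ε := by
        rw [← hnτ]; ring
      linarith [this.le]
    exact ⟨R, hRpos.1, hRpos.2, hbound⟩
  constructor
  · by_contra him
    have habs : 0 < |S.im| := abs_pos.mpr him
    obtain ⟨R, hRim, _, hb⟩ := main (|S.im| / (2 * T ^ 2)) (by positivity)
    have h1 : |S.im| = |(S - R).im| := by rw [Complex.sub_im, hRim, sub_zero]
    have h2 : |(S - R).im| ≤ ‖S - R‖ := by
      exact Complex.abs_im_le_norm _
    have h3 : T ^ 2 * (|S.im| / (2 * T ^ 2)) = |S.im| / 2 := by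
      field_simp
    rw [h3] at hb
    linarith
  · by_contra hre
    push_neg at hre
    obtain ⟨R, _, hRre, hb⟩ := main ((-S.re) / (2 * T ^ 2))
      (by apply div_pos (by linarith) (by positivity))
    have h1 : S.re = R.re + (S - R).re := by simp [Complex.sub_re]
    have h2 : |(S - R).re| ≤ ‖S - R‖ := by
      exact Complex.abs_re_le_norm _
    have h3 : T ^ 2 * ((-S.re) / (2 * T ^ 2)) = -S.re / 2 := by
      field_simp
    rw [h3] at hb
    have := neg_abs_le ((S - R).re)
    linarith

/-- Theorem 1(i): the Koopman eigenfunction kernel is Hermitian positive semidefinite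
on continuous trajectories. -/
theorem stmt_2 {X : Type*} [MetricSpace X] [CompactSpace X] (T : ℝ) (hT : 0 < T) (lam : ℂ)
    (k : X → X → ℝ) (hk : Continuous fun p : X × X => k p.1 p.2)
    (hsymm : ∀ a b, k a b = k b a)
    (hpsd : ∀ (M : ℕ) (a : Fin M → X) (c : Fin M → ℂ),
      (∑ i, ∑ j, (starRingEnd ℂ) (c i) * c j * (k (a i) (a j) : ℂ)).im = 0 ∧
      0 ≤ (∑ i, ∑ j, (starRingEnd ℂ) (c i) * c j * (k (a i) (a j) : ℂ)).re)
    (N : ℕ) (x : Fin N → ℝ → X) (hx : ∀ i, ContinuousOn (x i) (Set.Icc 0 T))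
    (c : Fin N → ℂ) :
    (∑ i, ∑ j, (starRingEnd ℂ) (c i) * c j * klam T lam k (x i) (x j)).im = 0 ∧
    0 ≤ (∑ i, ∑ j, (starRingEnd ℂ) (c i) * c j * klam T lam k (x i) (x j)).re := by
  classical
  set y : Fin N → ℝ → X := fun i s => x i ((Set.projIcc (0:ℝ) T hT.le s : Set.Icc (0:ℝ) T) : ℝ)
    with hy
  have hyc : ∀ i, Continuous (y i) := by
    intro i
    exact (hx i).comp_continuous (continuous_subtype_val.comp (continuous_projIcc))
      (fun s => (Set.projIcc (0:ℝ) T hT.le s).2)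
  have hyx : ∀ i, ∀ s ∈ Set.Icc (0:ℝ) T, y i s = x i s := by
    intro i s hs
    simp only [hy, Set.projIcc_of_mem hT.le hs]
  set g : Fin N → ℝ → ℂ := fun i s => c i * Complex.exp (-(starRingEnd ℂ) lam * (s : ℂ)) with hg
  have hgc : ∀ i, Continuous (g i) := fun i =>
    continuous_const.mul (Complex.continuous_exp.comp
      (continuous_const.mul Complex.continuous_ofReal))
  have hconj : ∀ (i : Fin N) (s : ℝ),
      (starRingEnd ℂ) (g i s) = (starRingEnd ℂ) (c i) * Complex.exp (-lam * (s : ℂ)) := by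
    intro i s
    rw [hg]
    simp only [map_mul]
    rw [← Complex.exp_conj]
    simp [map_mul, Complex.conj_ofReal]
  have hterm : ∀ i j : Fin N, Continuous (fun p : ℝ × ℝ =>
      (starRingEnd ℂ) (g i p.1) * g j p.2 * (k (y i p.1) (y j p.2) : ℂ)) := by
    intro i j
    have hconjc : Continuous fun z : ℂ => (starRingEnd ℂ) z := by
      simp only [starRingEnd_apply]; exact continuous_star
    refine Continuous.mul (Continuous.mul ?_ ?_) ?_
    · exact hconjc.comp ((hgc i).comp continuous_fst)
    · exact (hgc j).comp continuous_snd
    · exact Complex.continuous_ofReal.comp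
        (hk.comp (((hyc i).comp continuous_fst).prodMk ((hyc j).comp continuous_snd)))
  have hpair : ∀ i j : Fin N, (starRingEnd ℂ) (c i) * c j * klam T lam k (x i) (x j)
      = ∫ s in (0:ℝ)..T, ∫ t in (0:ℝ)..T,
          (starRingEnd ℂ) (g i s) * g j t * (k (y i s) (y j t) : ℂ) := by
    intro i j
    rw [klam, ← intervalIntegral.integral_const_mul]
    apply intervalIntegral.integral_congr
    intro s hs
    rw [Set.uIcc_of_le hT.le] at hs
    dsimp only
    rw [← intervalIntegral.integral_const_mul]
    apply intervalIntegral.integral_congr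
    intro t ht
    rw [Set.uIcc_of_le hT.le] at ht
    dsimp only
    rw [hconj i s, ← hyx i s hs, ← hyx j t ht]
    simp only [hg]
    ring
  have hEq : (∑ i, ∑ j, (starRingEnd ℂ) (c i) * c j * klam T lam k (x i) (x j))
      = ∫ s in (0:ℝ)..T, ∫ t in (0:ℝ)..T,
          ∑ i, ∑ j, (starRingEnd ℂ) (g i s) * g j t * (k (y i s) (y j t) : ℂ) := by
    have hintt : ∀ (i j : Fin N) (s : ℝ), IntervalIntegrable
        (fun t => (starRingEnd ℂ) (g i s) * g j t * (k (y i s) (y j t) : ℂ))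
        volume 0 T := by
      intro i j s
      exact ((hterm i j).comp (continuous_const.prodMk continuous_id)).intervalIntegrable 0 T
    have hints : ∀ i j : Fin N, IntervalIntegrable
        (fun s => ∫ t in (0:ℝ)..T,
          (starRingEnd ℂ) (g i s) * g j t * (k (y i s) (y j t) : ℂ)) volume 0 T := by
      intro i j
      have hu : Continuous (Function.uncurry (fun s t =>
          (starRingEnd ℂ) (g i s) * g j t * (k (y i s) (y j t) : ℂ))) := hterm i j
      exact (intervalIntegral.continuous_parametric_intervalIntegral_of_continuous'
        hu 0 T).intervalIntegrable 0 T
    calc (∑ i, ∑ j, (starRingEnd ℂ) (c i) * c j * klam T lam k (x i) (x j))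
        = ∑ i, ∑ j, ∫ s in (0:ℝ)..T, ∫ t in (0:ℝ)..T,
            (starRingEnd ℂ) (g i s) * g j t * (k (y i s) (y j t) : ℂ) :=
          Finset.sum_congr rfl fun i _ => Finset.sum_congr rfl fun j _ => hpair i j
      _ = ∫ s in (0:ℝ)..T, ∑ i, ∑ j, ∫ t in (0:ℝ)..T,
            (starRingEnd ℂ) (g i s) * g j t * (k (y i s) (y j t) : ℂ) :=
          sumsum_integral hints
      _ = _ := intervalIntegral.integral_congr fun s _ => sumsum_integral
            (fun i j => hintt i j s)
  rw [hEq]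
  exact core_psd T hT k hk hpsd N y hyc g hgc
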